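/- Set Q₀ = (1/π)∫_ℝ v(t) dt, Mₙ = sup_{x∈gₙ} Vₙ(x), and suppose ρ > 0 satisfies ρₙ ≥ ρ for all n ∈ ℤ. Then Σ_{n∈ℤ} Mₙ ≤ π² Q₀ / (3 ρ²). -/

import Mathlib

open MeasureTheory Set Real

theorem stmt_18
    (zm zp : ℤ → ℝ)
    (hz : ∀ n, zm n < zp n)
    (hsep : ∀ n, zp n < zm (n + 1))
    (v : ℝ → ℝ)
    (hvmeas : Measurable v)
    (hvint : MeasureTheory.Integrable v)
    (hvnn : ∀ t, 0 ≤ v t)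
    (hvsupp : ∀ t ∉ ⋃ n : ℤ, Set.Ioo (zm n) (zp n), v t = 0)
    (vn : ℤ → ℝ → ℝ)
    (hvn : ∀ n x, vn n x = Real.sqrt (|x - zm n| * |x - zp n|))
    (ρ : ℤ → ℝ)
    (hρ : ∀ n, ρ n = sInf (Set.image2 dist (Set.Ioo (zm n) (zp n))
      ((⋃ m : ℤ, Set.Ioo (zm m) (zp m)) \ Set.Ioo (zm n) (zp n))))
    (hρpos : ∀ n, 0 < ρ n)
    (Vn : ℤ → ℝ → ℝ)
    (hVn : ∀ n x, Vn n x = (1 / Real.pi) *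
      ∫ t in ((⋃ m : ℤ, Set.Ioo (zm m) (zp m)) \ Set.Ioo (zm n) (zp n)),
        v t / (|t - x| * vn n t))
    (Q₀ : ℝ) (hQ₀ : Q₀ = (1 / Real.pi) * ∫ t, v t)
    (Mn : ℤ → ℝ)
    (hMn : ∀ n, IsLUB (Vn n '' Set.Ioo (zm n) (zp n)) (Mn n))
    (ρ₀ : ℝ) (hρ₀ : 0 < ρ₀) (hρ₀le : ∀ n, ρ₀ ≤ ρ n)
    :
    Summable Mn ∧ ∑' n : ℤ, Mn n ≤ Real.pi ^ 2 * Q₀ / (3 * ρ₀ ^ 2) := by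
  set g : ℤ → Set ℝ := fun n => Set.Ioo (zm n) (zp n) with hg
  set U : Set ℝ := ⋃ m : ℤ, g m with hU
  -- the gap lemma
  have hgap : ∀ k : ℤ, zp k + ρ₀ ≤ zm (k + 1) := by
    intro k
    have h1 : ρ k ≤ zm (k + 1) - zp k := by
      refine le_of_forall_pos_le_add fun ε hε => ?_
      set δ : ℝ := min (ε / 3) (min ((zp k - zm k) / 2) ((zp (k+1) - zm (k+1)) / 2)) with hδ
      have hδpos : 0 < δ := by
        refine lt_min (by linarith) (lt_min (by linarith [hz k]) (by linarith [hz (k+1)]))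
      have hδ1 : δ ≤ ε / 3 := min_le_left _ _
      have hδ2 : δ ≤ (zp k - zm k) / 2 := (min_le_right _ _).trans (min_le_left _ _)
      have hδ3 : δ ≤ (zp (k+1) - zm (k+1)) / 2 := (min_le_right _ _).trans (min_le_right _ _)
      have hx : zp k - δ ∈ Set.Ioo (zm k) (zp k) := ⟨by linarith [hz k], by linarith⟩
      have hy : zm (k+1) + δ ∈ Set.Ioo (zm (k+1)) (zp (k+1)) := ⟨by linarith, by linarith [hz (k+1)]⟩
      have hyU : zm (k+1) + δ ∈ (⋃ m : ℤ, Set.Ioo (zm m) (zp m)) \ Set.Ioo (zm k) (zp k) := by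
        refine ⟨Set.mem_iUnion.2 ⟨k+1, hy⟩, fun h => ?_⟩
        exact absurd h.2 (not_lt.2 (by linarith [hsep k]))
      have hbdd : BddBelow (Set.image2 dist (Set.Ioo (zm k) (zp k))
          ((⋃ m : ℤ, Set.Ioo (zm m) (zp m)) \ Set.Ioo (zm k) (zp k))) := by
        refine ⟨0, ?_⟩
        rintro z ⟨a, _, b, _, rfl⟩
        exact dist_nonneg
      have hle : ρ k ≤ dist (zp k - δ) (zm (k+1) + δ) := by
        rw [hρ k]
        exact csInf_le hbdd (Set.mem_image2_of_mem hx hyU)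
      have hdist : dist (zp k - δ) (zm (k+1) + δ) = (zm (k+1) - zp k) + 2 * δ := by
        rw [Real.dist_eq, abs_of_nonpos (by linarith [hsep k])]
        ring
      rw [hdist] at hle
      linarith
    linarith [hρ₀le k]
  -- the chain lemma
  have hchain : ∀ m n : ℤ, m < n → zp m + ((n : ℝ) - (m : ℝ)) * ρ₀ ≤ zm n := by
    intro m n hmn
    have h : ∀ n : ℤ, m + 1 ≤ n → zp m + ((n : ℝ) - (m : ℝ)) * ρ₀ ≤ zm n := by
      refine Int.le_induction ?_ ?_
      · push_cast
        have := hgap m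
        linarith
      · intro n hn ih
        push_cast
        push_cast at ih
        have h1 := hgap n
        have h2 := hz n
        linarith
    exact h n (by omega)
  have horder : ∀ m n : ℤ, m < n → zp m ≤ zm n := by
    intro m n hmn
    have h := hchain m n hmn
    have h1 : (1 : ℝ) ≤ (n : ℝ) - (m : ℝ) := by
      have h2 : m + 1 ≤ n := by omega
      have h3 : ((m : ℝ) + 1) ≤ (n : ℝ) := by exact_mod_cast h2
      linarith
    nlinarith
  -- pairwise disjoint
  have hdisj : Pairwise (Function.onFun Disjoint g) := by
    intro m n hmn
    have : Disjoint (g m) (g n) := by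
      rw [Set.disjoint_left]
      intro x hxm hxn
      rcases lt_trichotomy m n with h | h | h
      · have h1 := horder m n h
        exact absurd hxn.1 (not_lt.2 (by linarith [hxm.2]))
      · exact hmn h
      · have h1 := horder n m h
        exact absurd hxm.1 (not_lt.2 (by linarith [hxn.2]))
    exact this
  have habs : ∀ m n : ℤ, m ≠ n → (1:ℝ) ≤ |(n:ℝ) - (m:ℝ)| := by
    intro m n hmn
    have h : (1:ℤ) ≤ |n - m| := Int.one_le_abs (by omega)
    calc (1:ℝ) = ((1:ℤ):ℝ) := by norm_num
      _ ≤ ((|n - m| : ℤ) : ℝ) := by exact_mod_cast h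
      _ = |(n:ℝ) - (m:ℝ)| := by push_cast; ring
  -- key distance estimates
  have hkey : ∀ m n : ℤ, m ≠ n → ∀ t ∈ g m,
      |(n:ℝ) - (m:ℝ)| * ρ₀ ≤ vn n t ∧ ∀ x ∈ g n, |(n:ℝ) - (m:ℝ)| * ρ₀ ≤ |t - x| := by
    intro m n hmn t ht
    have hd0 : 0 ≤ |(n:ℝ) - (m:ℝ)| * ρ₀ := mul_nonneg (abs_nonneg _) hρ₀.le
    have key2 : |(n:ℝ)-(m:ℝ)| * ρ₀ ≤ |t - zm n| ∧ |(n:ℝ)-(m:ℝ)| * ρ₀ ≤ |t - zp n| ∧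
        ∀ x ∈ g n, |(n:ℝ)-(m:ℝ)| * ρ₀ ≤ |t - x| := by
      rcases hmn.lt_or_gt with h | h
      · have hc := hchain m n h
        have habs' : |(n:ℝ) - (m:ℝ)| = (n:ℝ) - (m:ℝ) := abs_of_pos (by
          have : (m:ℝ) < (n:ℝ) := by exact_mod_cast h
          linarith)
        rw [habs']
        have ht2 := ht.2
        have h1 : ((n:ℝ)-(m:ℝ)) * ρ₀ ≤ zm n - t := by linarith
        refine ⟨?_, ?_, ?_⟩
        · calc ((n:ℝ)-(m:ℝ)) * ρ₀ ≤ zm n - t := h1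
            _ ≤ |t - zm n| := by rw [abs_sub_comm]; exact le_abs_self _
        · have := hz n
          calc ((n:ℝ)-(m:ℝ)) * ρ₀ ≤ zp n - t := by linarith
            _ ≤ |t - zp n| := by rw [abs_sub_comm]; exact le_abs_self _
        · intro x hx
          calc ((n:ℝ)-(m:ℝ)) * ρ₀ ≤ x - t := by linarith [hx.1]
            _ ≤ |t - x| := by rw [abs_sub_comm]; exact le_abs_self _
      · have hc := hchain n m h
        have habs' : |(n:ℝ) - (m:ℝ)| = (m:ℝ) - (n:ℝ) := by
          rw [abs_sub_comm]
          exact abs_of_pos (by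
            have : (n:ℝ) < (m:ℝ) := by exact_mod_cast h
            linarith)
        rw [habs']
        have ht1 := ht.1
        have h1 : ((m:ℝ)-(n:ℝ)) * ρ₀ ≤ t - zp n := by linarith
        refine ⟨?_, ?_, ?_⟩
        · have := hz n
          calc ((m:ℝ)-(n:ℝ)) * ρ₀ ≤ t - zm n := by linarith
            _ ≤ |t - zm n| := le_abs_self _
        · calc ((m:ℝ)-(n:ℝ)) * ρ₀ ≤ t - zp n := h1
            _ ≤ |t - zp n| := le_abs_self _
        · intro x hx
          calc ((m:ℝ)-(n:ℝ)) * ρ₀ ≤ t - x := by linarith [hx.2]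
            _ ≤ |t - x| := le_abs_self _
    obtain ⟨k1, k2, k3⟩ := key2
    refine ⟨?_, k3⟩
    rw [hvn]
    calc |(n:ℝ)-(m:ℝ)| * ρ₀ = Real.sqrt ((|(n:ℝ)-(m:ℝ)| * ρ₀) * (|(n:ℝ)-(m:ℝ)| * ρ₀)) :=
        (Real.sqrt_mul_self hd0).symm
      _ ≤ Real.sqrt (|t - zm n| * |t - zp n|) :=
        Real.sqrt_le_sqrt (mul_le_mul k1 k2 hd0 (abs_nonneg _))
  -- measurability facts
  have hgmeas : ∀ m : ℤ, MeasurableSet (g m) := fun m => measurableSet_Ioo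
  have hUmeas : MeasurableSet U := MeasurableSet.iUnion hgmeas
  have hS : ∀ n : ℤ, MeasurableSet (U \ g n) := fun n => hUmeas.diff (hgmeas n)
  have hvnmeas : ∀ n : ℤ, Measurable (vn n) := by
    intro n
    have h : vn n = fun x => Real.sqrt (|x - zm n| * |x - zp n|) := funext (hvn n)
    rw [h]
    exact ((measurable_id.sub_const (zm n)).abs.mul (measurable_id.sub_const (zp n)).abs).sqrt
  have hvnnn : ∀ n t, 0 ≤ vn n t := fun n t => by rw [hvn]; exact Real.sqrt_nonneg _
  -- the interval masses
  set c : ℤ → ℝ := fun m => ∫ t in g m, v t with hc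
  have hcnn : ∀ m, 0 ≤ c m := fun m => setIntegral_nonneg (hgmeas m) (fun t _ => hvnn t)
  have hcsum : HasSum c (∫ t, v t) := by
    have h1 : HasSum c (∫ t in U, v t) :=
      hasSum_integral_iUnion hgmeas hdisj hvint.integrableOn
    rwa [setIntegral_eq_integral_of_forall_compl_eq_zero (fun t ht => hvsupp t ht)] at h1
  -- the auxiliary sequence and its sum
  set aux : ℤ → ℝ := fun k => 1 / (((k : ℝ)) ^ 2 * ρ₀ ^ 2) with haux
  have hauxnn : ∀ k, 0 ≤ aux k := fun k => by rw [haux]; positivity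
  set A : ℝ := Real.pi ^ 2 / (3 * ρ₀ ^ 2) with hA
  have hauxA : HasSum aux A := by
    have hval : ∀ p : ℕ, (1:ℝ) / (p:ℝ) ^ 2 * (1 / ρ₀ ^ 2) = aux p := by
      intro p
      rw [haux]
      push_cast
      rw [div_mul_div_comm, one_mul]
    have hpos : HasSum (fun p : ℕ => aux p) (Real.pi ^ 2 / 6 * (1 / ρ₀ ^ 2)) := by
      have h0 := hasSum_zeta_two.mul_right (1 / ρ₀ ^ 2)
      exact h0.congr_fun fun p => (hval p).symm
    have hneg : HasSum (fun p : ℕ => aux (-(p + 1))) (Real.pi ^ 2 / 6 * (1 / ρ₀ ^ 2)) := by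
      have h0 := hasSum_zeta_two.mul_right (1 / ρ₀ ^ 2)
      have h1 : HasSum (fun p : ℕ => (1:ℝ) / (((p + 1 : ℕ)):ℝ) ^ 2 * (1 / ρ₀ ^ 2))
          (Real.pi ^ 2 / 6 * (1 / ρ₀ ^ 2)) := by
        rw [hasSum_nat_add_iff (f := fun p : ℕ => (1:ℝ) / (p:ℝ) ^ 2 * (1 / ρ₀ ^ 2)) 1]
        simpa using h0
      refine h1.congr_fun fun p => ?_
      rw [haux]
      simp only
      push_cast
      rw [div_mul_div_comm, one_mul]
      ring_nf
    have hsum := hpos.of_nat_of_neg_add_one hneg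
    have : Real.pi ^ 2 / 6 * (1 / ρ₀ ^ 2) + Real.pi ^ 2 / 6 * (1 / ρ₀ ^ 2) = A := by
      rw [hA]
      field_simp
      ring
    rwa [this] at hsum
  -- summability of the double family
  have hcn : Summable fun m => ‖c m‖ := by
    refine (summable_congr fun m => ?_).2 hcsum.summable
    rw [Real.norm_eq_abs, abs_of_nonneg (hcnn m)]
  have hauxn : Summable fun k => ‖aux k‖ := by
    refine (summable_congr fun k => ?_).2 hauxA.summable
    rw [Real.norm_eq_abs, abs_of_nonneg (hauxnn k)]
  have hH : Summable fun q : ℤ × ℤ => c q.1 * aux q.2 := (Summable.mul_norm hcn hauxn).of_norm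
  have htsumH : ∑' q : ℤ × ℤ, c q.1 * aux q.2 = (∫ t, v t) * A := by
    have h0 := tsum_mul_tsum_of_summable_norm hcn hauxn
    rw [hcsum.tsum_eq, hauxA.tsum_eq] at h0
    exact h0.symm
  let e : ℤ × ℤ ≃ ℤ × ℤ :=
    { toFun := fun p => (p.2, p.1 - p.2)
      invFun := fun q => (q.1 + q.2, q.1)
      left_inv := fun p => by
        obtain ⟨a, b⟩ := p
        simp only [Prod.mk.injEq]
        exact ⟨by ring, trivial⟩
      right_inv := fun q => by
        obtain ⟨a, b⟩ := q
        simp only [Prod.mk.injEq]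
        exact ⟨trivial, by ring⟩ }
  have hGsum : Summable fun p : ℤ × ℤ => c p.2 * aux (p.1 - p.2) := by
    have : (fun p : ℤ × ℤ => c p.2 * aux (p.1 - p.2)) =
        (fun q : ℤ × ℤ => c q.1 * aux q.2) ∘ e := rfl
    rw [this]
    exact e.summable_iff.2 hH
  have hGts : ∑' p : ℤ × ℤ, c p.2 * aux (p.1 - p.2) = (∫ t, v t) * A := by
    have h0 := e.tsum_eq (fun q : ℤ × ℤ => c q.1 * aux q.2)
    rw [← htsumH]
    exact h0
  set T : ℤ → ℝ := fun n => ∑' m, c m * aux (n - m) with hT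
  have hTfib : ∀ n, HasSum (fun m => c m * aux (n - m)) (T n) :=
    fun n => (hGsum.prod_factor n).hasSum
  have hTsum : HasSum T ((∫ t, v t) * A) := by
    have h0 := hGsum.hasSum.prod_fiberwise hTfib
    rwa [hGts] at h0
  -- the pointwise bound on Vn
  have hBnd : ∀ n : ℤ, ∀ x ∈ g n, Vn n x ≤ (1 / Real.pi) * T n := by
    intro n x hx
    set φ : ℝ → ℝ := fun t => v t / (|t - x| * vn n t) with hφ
    have hφmeas : Measurable φ := hvmeas.div ((measurable_id.sub_const x).abs.mul (hvnmeas n))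
    have hφnn : ∀ t, 0 ≤ φ t := fun t =>
      div_nonneg (hvnn t) (mul_nonneg (abs_nonneg _) (hvnnn n t))
    have hφle : ∀ t D, 0 < D → D ≤ |t - x| * vn n t → φ t ≤ v t * (1 / D) := by
      intro t D hD hle
      rw [hφ]
      simp only
      rw [div_eq_mul_one_div]
      exact mul_le_mul_of_nonneg_left (one_div_le_one_div_of_le hD hle) (hvnn t)
    have hmem : ∀ t ∈ U \ g n, ∃ m : ℤ, m ≠ n ∧ t ∈ g m := by
      intro t ht
      obtain ⟨m, hm⟩ := Set.mem_iUnion.1 ht.1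
      exact ⟨m, fun h => ht.2 (h ▸ hm), hm⟩
    have hφle' : ∀ t ∈ U \ g n, φ t ≤ v t * (1 / (ρ₀ * ρ₀)) := by
      intro t ht
      obtain ⟨m, hmn, htm⟩ := hmem t ht
      obtain ⟨hv1, hv2⟩ := hkey m n hmn t htm
      have hd : ρ₀ ≤ |(n:ℝ)-(m:ℝ)| * ρ₀ := le_mul_of_one_le_left hρ₀.le (habs m n hmn)
      refine hφle t (ρ₀ * ρ₀) (by positivity) ?_
      exact mul_le_mul (hd.trans (hv2 x hx)) (hd.trans hv1) hρ₀.le (abs_nonneg _)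
    have hφint : IntegrableOn φ (U \ g n) := by
      refine Integrable.mono' ((hvint.mul_const (1/(ρ₀*ρ₀))).integrableOn)
        hφmeas.aestronglyMeasurable ?_
      refine (ae_restrict_iff' (hS n)).2 (Filter.Eventually.of_forall fun t ht => ?_)
      rw [Real.norm_eq_abs, abs_of_nonneg (hφnn t)]
      exact hφle' t ht
    have hUdiff : (⋃ m : ℤ, (g m \ g n)) = U \ g n := by
      rw [hU, Set.iUnion_diff]
    have hsum1 : HasSum (fun m => ∫ t in g m \ g n, φ t) (∫ t in U \ g n, φ t) := by
      have h0 := hasSum_integral_iUnion (μ := volume) (f := φ)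
        (fun m => (hgmeas m).diff (hgmeas n))
        (fun i j hij => (hdisj hij).mono Set.diff_subset Set.diff_subset)
        (by rw [hUdiff]; exact hφint)
      rwa [hUdiff] at h0
    have hterm : ∀ m : ℤ, (∫ t in g m \ g n, φ t) ≤ c m * aux (n - m) := by
      intro m
      rcases eq_or_ne m n with rfl | hmn
      · rw [Set.diff_self]
        simp [haux, hcnn]
      · rw [(hdisj hmn).sdiff_eq_left]
        have hgsub : g m ⊆ U \ g n := fun t ht =>
          ⟨Set.mem_iUnion.2 ⟨m, ht⟩, fun h => Set.disjoint_left.1 (hdisj hmn) ht h⟩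
        have hpt : ∀ t ∈ g m, φ t ≤ v t * aux (n - m) := by
          intro t ht
          obtain ⟨hv1, hv2⟩ := hkey m n hmn t ht
          have hd0 : 0 < |(n:ℝ)-(m:ℝ)| * ρ₀ :=
            mul_pos (lt_of_lt_of_le one_pos (habs m n hmn)) hρ₀
          have h2 : (|(n:ℝ)-(m:ℝ)| * ρ₀) * (|(n:ℝ)-(m:ℝ)| * ρ₀) ≤ |t - x| * vn n t :=
            mul_le_mul (hv2 x hx) hv1 hd0.le (abs_nonneg _)
          have h3 := hφle t _ (mul_pos hd0 hd0) h2
          have h4 : (1 : ℝ) / ((|(n:ℝ)-(m:ℝ)| * ρ₀) * (|(n:ℝ)-(m:ℝ)| * ρ₀)) = aux (n - m) := by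
            rw [haux]
            simp only
            push_cast
            rw [show (|(n:ℝ)-(m:ℝ)| * ρ₀) * (|(n:ℝ)-(m:ℝ)| * ρ₀)
                = |(n:ℝ)-(m:ℝ)| ^ 2 * ρ₀ ^ 2 from by ring, sq_abs]
          rwa [h4] at h3
        calc (∫ t in g m, φ t) ≤ ∫ t in g m, v t * aux (n - m) :=
              setIntegral_mono_on (hφint.mono_set hgsub)
                ((hvint.mul_const _).integrableOn) (hgmeas m) hpt
          _ = c m * aux (n - m) := by rw [hc]; exact integral_mul_const _ _
    have hVle : (∫ t in U \ g n, φ t) ≤ T n := by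
      rw [← hsum1.tsum_eq, hT]
      exact Summable.tsum_le_tsum hterm hsum1.summable (hTfib n).summable
    have hπ : (0:ℝ) ≤ 1 / Real.pi := le_of_lt (by positivity)
    calc Vn n x = (1 / Real.pi) * ∫ t in U \ g n, φ t := hVn n x
      _ ≤ (1 / Real.pi) * T n := mul_le_mul_of_nonneg_left hVle hπ
  -- bounds on Mn
  have hMnle : ∀ n, Mn n ≤ (1 / Real.pi) * T n := by
    intro n
    refine (hMn n).2 ?_
    rintro y ⟨x, hx, rfl⟩
    exact hBnd n x hx
  have hMnnn : ∀ n, 0 ≤ Mn n := by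
    intro n
    have hxmem : (zm n + zp n)/2 ∈ g n := ⟨by linarith [hz n], by linarith [hz n]⟩
    have h0 : 0 ≤ Vn n ((zm n + zp n)/2) := by
      rw [hVn]
      refine mul_nonneg (le_of_lt (by positivity)) (setIntegral_nonneg (hS n) fun t _ => ?_)
      exact div_nonneg (hvnn t) (mul_nonneg (abs_nonneg _) (hvnnn n t))
    exact h0.trans ((hMn n).1 (Set.mem_image_of_mem _ hxmem))
  -- conclusion
  have hBsum : Summable fun n => (1 / Real.pi) * T n := hTsum.summable.mul_left _
  have hMsum : Summable Mn := Summable.of_nonneg_of_le hMnnn hMnle hBsum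
  refine ⟨hMsum, ?_⟩
  have h1 : ∑' n, Mn n ≤ ∑' n, (1 / Real.pi) * T n := Summable.tsum_le_tsum hMnle hMsum hBsum
  have h2 : ∑' n, (1 / Real.pi) * T n = (1 / Real.pi) * ((∫ t, v t) * A) := by
    rw [tsum_mul_left, hTsum.tsum_eq]
  rw [h2] at h1
  refine h1.trans_eq ?_
  rw [hQ₀, hA]
  have hπ := Real.pi_pos
  field_simp
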